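/- Let z > 0 be a smooth positive function and let A, B : (0,∞) → (0,∞) be smooth. Suppose m ≥ 1, n ≥ 2 are integers and A, B satisfy the ODE m·A·B′(z) + (n−1)·B·A′(z) + m·z^{-1}·A·(A+B) = 0. Then for φ(z) := z·B(z)·A(z)^{(n-1)/m} one has the relation A(z)^{(m+n-1)/m} = −φ′(z); conversely, if φ : (0,∞) → (0,∞) is smooth with φ′ < 0 and one sets A = (−φ′)^{m/(m+n-1)} and B = z^{-1} A^{-(n-1)/m} φ, then (A,B) solves the ODE. -/

import Mathlib

open Set

lemma helper_deriv (A B : ℝ → ℝ) (p z : ℝ)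
    (hA : DifferentiableAt ℝ A z) (hB : DifferentiableAt ℝ B z) (ha : A z ≠ 0) :
    HasDerivAt (fun t => t * B t * A t ^ p)
      ((B z + z * deriv B z) * A z ^ p + z * B z * (p * A z ^ (p-1) * deriv A z)) z := by
  have h1 : HasDerivAt (fun t => A t ^ p) (p * A z ^ (p-1) * deriv A z) z := by
    have := (Real.hasDerivAt_rpow_const (x := A z) (p := p) (Or.inl ha)).comp z hA.hasDerivAt
    exact this.congr_deriv (by ring)
  have h2 : HasDerivAt (fun t => t * B t) (1 * B z + z * deriv B z) z :=
    (hasDerivAt_id z).mul hB.hasDerivAt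
  exact (h2.mul h1).congr_deriv (by ring)

/-- The ODE `m·A·B′ + (n−1)·B·A′ + m·z⁻¹·A·(A+B) = 0` on `(0,∞)`
characterising balanced metrics of the Weinstein construction.  If positive `A`, `B`
solve it, then with `φ(z) = z·B(z)·A(z)^((n−1)/m)` one has
`A(z)^((m+n−1)/m) = −φ′(z)`; conversely, if `φ > 0` with `φ′ < 0` and one sets
`A = (−φ′)^(m/(m+n−1))`, `B = z⁻¹·A^(−(n−1)/m)·φ`, then `(A,B)` solves the ODE. -/
theorem stmt14 (m n : ℕ) (hm : 1 ≤ m) (hn : 2 ≤ n) :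
    (∀ A B φ : ℝ → ℝ,
      (∀ z ∈ Ioi (0:ℝ), DifferentiableAt ℝ A z) →
      (∀ z ∈ Ioi (0:ℝ), DifferentiableAt ℝ B z) →
      (∀ z ∈ Ioi (0:ℝ), 0 < A z) → (∀ z ∈ Ioi (0:ℝ), 0 < B z) →
      (∀ z ∈ Ioi (0:ℝ),
        (m : ℝ) * A z * deriv B z + ((n : ℝ) - 1) * B z * deriv A z
          + (m : ℝ) * z⁻¹ * A z * (A z + B z) = 0) →
      (φ = fun t : ℝ => t * B t * A t ^ (((n : ℝ) - 1) / (m : ℝ))) →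
      ∀ z ∈ Ioi (0:ℝ), A z ^ (((m : ℝ) + (n : ℝ) - 1) / (m : ℝ)) = -(deriv φ z)) ∧
    (∀ φ A B : ℝ → ℝ,
      (∀ z ∈ Ioi (0:ℝ), DifferentiableAt ℝ φ z) →
      (∀ z ∈ Ioi (0:ℝ), DifferentiableAt ℝ (deriv φ) z) →
      (∀ z ∈ Ioi (0:ℝ), 0 < φ z) →
      (∀ z ∈ Ioi (0:ℝ), deriv φ z < 0) →
      (A = fun t : ℝ => (-(deriv φ t)) ^ ((m : ℝ) / ((m : ℝ) + (n : ℝ) - 1))) →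
      (B = fun t : ℝ => t⁻¹ * A t ^ (-(((n : ℝ) - 1) / (m : ℝ))) * φ t) →
      ∀ z ∈ Ioi (0:ℝ),
        (m : ℝ) * A z * deriv B z + ((n : ℝ) - 1) * B z * deriv A z
          + (m : ℝ) * z⁻¹ * A z * (A z + B z) = 0) := by
  have hm' : (0:ℝ) < (m:ℝ) := by exact_mod_cast Nat.lt_of_lt_of_le Nat.zero_lt_one hm
  have hmn : (0:ℝ) < (m:ℝ) + (n:ℝ) - 1 := by
    have : (1:ℝ) ≤ (m:ℝ) := by exact_mod_cast hm
    have : (2:ℝ) ≤ (n:ℝ) := by exact_mod_cast hn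
    linarith
  set p : ℝ := ((n:ℝ) - 1) / (m:ℝ) with hp_def
  have hn1 : ((n:ℝ) - 1) = (m:ℝ) * p := by rw [hp_def]; field_simp
  constructor
  · intro A B φ hAd hBd hApos hBpos hODE hφ z hz
    have hz' : 0 < z := hz
    have ha0 : 0 < A z := hApos z hz
    have hexp : ((m:ℝ) + (n:ℝ) - 1) / (m:ℝ) = 1 + p := by
      field_simp [hp_def]
      linear_combination hn1
    have hd := (helper_deriv A B p z (hAd z hz) (hBd z hz) ha0.ne').deriv
    rw [hexp, hφ, hd]
    have hv : A z ^ (p - 1) * A z = A z ^ p := by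
      rw [← Real.rpow_add_one ha0.ne' (p-1)]
      norm_num
    have hw : A z ^ (1 + p) = A z * A z ^ p := by
      rw [Real.rpow_add ha0 1 p, Real.rpow_one]
    have hzz : z * z⁻¹ = 1 := mul_inv_cancel₀ hz'.ne'
    have hODE1 := hODE z hz
    rw [hn1] at hODE1
    have hT : (m:ℝ) * A z * deriv B z * z + (m:ℝ) * p * B z * deriv A z * z
        + (m:ℝ) * A z * (A z + B z) = 0 := by
      linear_combination z * hODE1 - ((m:ℝ) * A z * (A z + B z)) * hzz
    have key : (A z * A z ^ p + ((B z + z * deriv B z) * A z ^ p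
        + z * B z * (p * A z ^ (p-1) * deriv A z))) * ((m:ℝ) * A z) = 0 := by
      linear_combination (A z ^ p) * hT + ((m:ℝ) * p * B z * deriv A z * z) * hv
    have hma : (m:ℝ) * A z ≠ 0 := by positivity
    have inner := (mul_eq_zero.mp key).resolve_right hma
    rw [hw]
    linarith
  · intro φ A B hφd hφ'd hφpos hφ'neg hA hB z hz
    have hz' : 0 < z := hz
    set q : ℝ := (m:ℝ) / ((m:ℝ) + (n:ℝ) - 1) with hq_def
    have hApos : ∀ t ∈ Ioi (0:ℝ), 0 < A t := by
      intro t ht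
      rw [hA]
      exact Real.rpow_pos_of_pos (neg_pos.2 (hφ'neg t ht)) _
    have ha0 : 0 < A z := hApos z hz
    have hAd : DifferentiableAt ℝ A z := by
      rw [hA]
      exact ((hφ'd z hz).neg).rpow_const (Or.inl (neg_pos.2 (hφ'neg z hz)).ne')
    have hBd : DifferentiableAt ℝ B z := by
      rw [hB]
      exact ((differentiableAt_id.inv hz'.ne').mul
        (hAd.rpow_const (Or.inl ha0.ne'))).mul (hφd z hz)
    have hEq : (fun t => t * B t * A t ^ p) =ᶠ[nhds z] φ := by
      filter_upwards [isOpen_Ioi.mem_nhds hz] with t ht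
      have hat : 0 < A t := hApos t ht
      rw [hB]
      simp only
      have ht' : t ≠ 0 := (Set.mem_Ioi.mp ht).ne'
      have h1 : A t ^ p ≠ 0 := (Real.rpow_pos_of_pos hat p).ne'
      have hre : t * (t⁻¹ * (A t ^ p)⁻¹ * φ t) * A t ^ p
          = (t * t⁻¹) * ((A t ^ p)⁻¹ * (A t ^ p)) * φ t := by ring
      rw [Real.rpow_neg hat.le, hre, mul_inv_cancel₀ ht', inv_mul_cancel₀ h1, one_mul, one_mul]
    have hder : deriv φ z = (B z + z * deriv B z) * A z ^ p
        + z * B z * (p * A z ^ (p-1) * deriv A z) := by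
      rw [← hEq.deriv_eq, (helper_deriv A B p z hAd hBd ha0.ne').deriv]
    have hw : A z ^ (1 + p) = A z * A z ^ p := by
      rw [Real.rpow_add ha0 1 p, Real.rpow_one]
    have hq1 : q * (1 + p) = 1 := by
      rw [hq_def, hp_def]
      field_simp
      ring
    have hphi : -(deriv φ z) = A z * A z ^ p := by
      rw [← hw, hA]
      simp only
      rw [← Real.rpow_mul (neg_pos.2 (hφ'neg z hz)).le, hq1, Real.rpow_one]
    have hv : A z ^ (p - 1) * A z = A z ^ p := by
      rw [← Real.rpow_add_one ha0.ne' (p-1)]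
      norm_num
    have hzz : z * z⁻¹ = 1 := mul_inv_cancel₀ hz'.ne'
    have hE : (B z + z * deriv B z) * A z ^ p + z * B z * (p * A z ^ (p-1) * deriv A z)
        = -(A z * A z ^ p) := by rw [← hder]; linarith [hphi]
    rw [hn1]
    have key : ((m:ℝ) * A z * deriv B z + (m:ℝ) * p * B z * deriv A z
        + (m:ℝ) * z⁻¹ * A z * (A z + B z)) * (z * A z ^ p) = 0 := by
      linear_combination ((m:ℝ) * A z) * hE - ((m:ℝ) * p * B z * deriv A z * z) * hv
        + ((m:ℝ) * A z * (A z + B z) * A z ^ p) * hzz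
    exact (mul_eq_zero.mp key).resolve_right (by positivity)
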